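/- Let M = (1/√2)·e^{7πi/12}·[[1, i],[1, −i]]. Then M³ = I₂. Consequently, the 5×5 block-diagonal matrix 𝔅 = M ⊕ P, where P = [[0,1,0],[0,0,1],[1,0,0]] is the cyclic permutation matrix, satisfies 𝔅³ = I₅. -/

import Mathlib

open Matrix Complex

noncomputable section

/-- Block-diagonal sum of square matrices. -/
def bdiag {m n : ℕ} (A : Matrix (Fin m) (Fin m) ℂ) (B : Matrix (Fin n) (Fin n) ℂ) :
    Matrix (Fin (m + n)) (Fin (m + n)) ℂ :=
  Matrix.reindex finSumFinEquiv finSumFinEquiv (Matrix.fromBlocks A 0 0 B)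

/-- The associativity matrix `M = a^1_{x,x,x}`. -/
def MM : Matrix (Fin 2) (Fin 2) ℂ :=
  ((1 / (Real.sqrt 2 : ℂ)) * Complex.exp (7 * Real.pi * Complex.I / 12)) •
    !![1, Complex.I; 1, -Complex.I]

/-- The cyclic permutation matrix `P = [[0,1,0],[0,0,1],[1,0,0]]`. -/
def PM : Matrix (Fin 3) (Fin 3) ℂ := !![0,1,0; 0,0,1; 1,0,0]

/-- The 'arm-bending' operator `𝔅 = M ⊕ P`. -/
def BB : Matrix (Fin 5) (Fin 5) ℂ := bdiag MM PM

lemma exp_cube : Complex.exp (7 * Real.pi * Complex.I / 12) ^ 3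
    = (Real.sqrt 2)/2 * (1 - Complex.I) := by
  rw [← Complex.exp_nat_mul]
  have : ((3:ℕ):ℂ) * (7 * Real.pi * Complex.I / 12) = (7*Real.pi/4 : ℝ) * Complex.I := by
    push_cast; ring
  rw [this, Complex.exp_mul_I, ← Complex.ofReal_cos, ← Complex.ofReal_sin]
  have h1 : (7*Real.pi/4 : ℝ) = 2*Real.pi - Real.pi/4 := by ring
  rw [h1, Real.cos_sub, Real.sin_sub]
  simp [Real.cos_two_pi, Real.sin_two_pi, Real.cos_pi_div_four, Real.sin_pi_div_four]
  ring

lemma coeff_cube : ((1 / (Real.sqrt 2 : ℂ)) * Complex.exp (7 * Real.pi * Complex.I / 12)) ^ 3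
    = (1 - Complex.I)/4 := by
  have h2 : ((Real.sqrt 2 : ℝ) : ℂ) ^ 2 = 2 := by
    norm_cast
    rw [sq, Real.mul_self_sqrt] <;> norm_num
  have hne : ((Real.sqrt 2 : ℝ) : ℂ) ≠ 0 := by
    intro h
    rw [← pow_eq_zero_iff (n := 2) (by norm_num)] at h
    rw [h2] at h; norm_num at h
  rw [mul_pow, exp_cube]
  field_simp
  ring_nf
  linear_combination (-2 + 2*Complex.I) * h2

lemma hA : !![1, Complex.I; 1, -Complex.I] ^ 3
    = (2 + 2*Complex.I) • (1 : Matrix (Fin 2) (Fin 2) ℂ) := by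
  ext i j
  fin_cases i <;> fin_cases j <;>
    simp [pow_succ, Matrix.mul_apply, Fin.sum_univ_two, Matrix.one_apply] <;>
    first
      | linear_combination (-2 : ℂ) * Complex.I_mul_I
      | linear_combination (-4 : ℂ) * Complex.I_mul_I
      | linear_combination (2 : ℂ) * Complex.I_mul_I
      | linear_combination (4 : ℂ) * Complex.I_mul_I
      | ring

lemma hM : MM ^ 3 = 1 := by
  rw [MM, smul_pow, hA, coeff_cube, smul_smul]
  have : (1 - Complex.I)/4 * (2 + 2*Complex.I) = 1 := by
    have := Complex.I_mul_I
    field_simp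
    ring_nf
    rw [Complex.I_sq]
    ring
  rw [this, one_smul]

lemma hP : PM ^ 3 = 1 := by
  rw [PM, pow_succ, pow_succ, pow_one, Matrix.mul_fin_three, Matrix.mul_fin_three,
    Matrix.one_fin_three]
  norm_num

lemma bdiag_mul {m n : ℕ} (A C : Matrix (Fin m) (Fin m) ℂ) (B D : Matrix (Fin n) (Fin n) ℂ) :
    bdiag A B * bdiag C D = bdiag (A * C) (B * D) := by
  simp only [bdiag, Matrix.reindex_apply, Matrix.submatrix_mul_equiv,
    Matrix.fromBlocks_multiply]
  simp

lemma bdiag_one {m n : ℕ} : bdiag (1 : Matrix (Fin m) (Fin m) ℂ) (1 : Matrix (Fin n) (Fin n) ℂ)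
    = 1 := by
  simp only [bdiag, Matrix.fromBlocks_one, Matrix.reindex_apply, Matrix.submatrix_one_equiv]

/-- `M³ = I₂`, hence `𝔅³ = I₅`: the category carries a strict pivotal structure. -/
theorem arm_bending_cubes_to_identity :
    MM ^ 3 = 1 ∧ BB ^ 3 = 1 := by
  refine ⟨hM, ?_⟩
  have e1 : MM * MM * MM = 1 := by have := hM; rwa [pow_succ, pow_succ, pow_one] at this
  have e2 : PM * PM * PM = 1 := by have := hP; rwa [pow_succ, pow_succ, pow_one] at this
  rw [BB, pow_succ, pow_succ, pow_one, bdiag_mul, bdiag_mul, e1, e2, bdiag_one]
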